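/- Let A be an anti-commutative CB-algebra over a field F of characteristic different from 2. Then A is metabelian, i.e., A^{(2)} = 0; in particular (x·y)·(z·w) = 0 for all x, y, z, w ∈ A. -/
import Mathlib


/-- The derived series: `derSeries mul 0 = A` and
`derSeries mul (k+1) = span {u·v | u, v ∈ derSeries mul k}`. -/
def derSeries {F A : Type*} [Field F] [AddCommGroup A] [Module F A]
    (mul : A →ₗ[F] A →ₗ[F] A) : ℕ → Submodule F A
  | 0 => ⊤
  | k + 1 => Submodule.span F
      {w : A | ∃ u ∈ derSeries mul k, ∃ v ∈ derSeries mul k, w = mul u v}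

/-- An anti-commutative CB-algebra over a field of characteristic different
from 2 is metabelian: `A⁽²⁾ = 0`; in particular `(x·y)·(z·w) = 0` for all
`x, y, z, w`. -/
theorem stmt_10 (F : Type*) [Field F] (h2 : (2 : F) ≠ 0)
    (A : Type*) [AddCommGroup A] [Module F A]
    (mul : A →ₗ[F] A →ₗ[F] A)
    (hac : ∀ x : A, mul x x = 0)
    (hcb : ∀ x y : A, mul x y = 0 → ∀ z : A, mul (mul x z) y = 0) :
    derSeries mul 2 = ⊥ ∧ (∀ x y z w : A, mul (mul x y) (mul z w) = 0) := by
  -- antisymmetry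
  have hskew : ∀ x y : A, mul x y = - mul y x := by
    intro x y
    have h := hac (x + y)
    simp only [map_add, LinearMap.add_apply, hac] at h
    linear_combination (norm := abel) h
  -- (xz)x = 0
  have h1 : ∀ x z : A, mul (mul x z) x = 0 := fun x z => hcb x x (hac x) z
  -- linearization: (xz)y = -(yz)x
  have h2' : ∀ x y z : A, mul (mul x z) y = - mul (mul y z) x := by
    intro x y z
    have h := hcb (x + y) (x + y) (hac (x + y)) z
    simp only [map_add, LinearMap.add_apply] at h
    rw [h1 x z, h1 y z] at h
    linear_combination (norm := abel) h
  -- cyclic identity: (uv)w = (vw)u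
  have hcyc : ∀ u v w : A, mul (mul u v) w = mul (mul v w) u := by
    intro u v w
    rw [h2' u w v, hskew w v]
    simp
  -- (zx)(xy) = 0
  have h3 : ∀ x y z : A, mul (mul z x) (mul x y) = 0 := by
    intro x y z
    have h := hcb (mul x y) x (h1 x y) z
    rwa [hcyc (mul x y) z x] at h
  -- linearization: (zx)(wy) + (zw)(xy) = 0
  have h4 : ∀ x y z w : A, mul (mul z x) (mul w y) + mul (mul z w) (mul x y) = 0 := by
    intro x y z w
    have h := h3 (x + w) y z
    simp only [map_add, LinearMap.add_apply] at h
    rw [h3 x y z, h3 w y z] at h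
    linear_combination (norm := abel) h
  -- the key identity
  have key : ∀ x y z w : A, mul (mul x y) (mul z w) = 0 := by
    intro x y z w
    have e1 := h4 y w x z  -- (xy)(zw) + (xz)(yw) = 0
    have e3 := h4 w z y x  -- (yw)(xz) + (yx)(wz) = 0
    have e2 : mul (mul x z) (mul y w) = - mul (mul y w) (mul x z) := hskew _ _
    have e4 : mul (mul y x) (mul w z) = mul (mul x y) (mul z w) := by
      rw [hskew y x, hskew w z]; simp
    have hpp : mul (mul x y) (mul z w) + mul (mul x y) (mul z w) = 0 := by
      linear_combination (norm := abel) e1 - e2 + e3 - e4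
    have h2s : (2 : F) • mul (mul x y) (mul z w) = 0 := by
      rw [two_smul]; exact hpp
    rcases smul_eq_zero.mp h2s with h | h
    · exact absurd h h2
    · exact h
  refine ⟨?_, key⟩
  -- derSeries mul 2 = ⊥
  have hz : ∀ u ∈ derSeries mul 1, ∀ v ∈ derSeries mul 1, mul u v = 0 := by
    intro u hu v hv
    have hu' : ∀ v ∈ derSeries mul 1, mul u v = 0 := by
      refine Submodule.span_induction (p := fun u _ => ∀ v ∈ derSeries mul 1, mul u v = 0)
        ?_ ?_ ?_ ?_ hu
      · rintro _ ⟨a, -, b, -, rfl⟩ v hv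
        refine Submodule.span_induction (p := fun v _ => mul (mul a b) v = 0)
          ?_ ?_ ?_ ?_ hv
        · rintro _ ⟨c, -, d, -, rfl⟩; exact key a b c d
        · simp
        · intro p q _ _ hp hq; simp [hp, hq]
        · intro c p _ hp; simp [hp]
      · intro v _; simp
      · intro p q _ _ hp hq v hv
        simp [LinearMap.add_apply, hp v hv, hq v hv]
      · intro c p _ hp v hv
        simp [hp v hv]
    exact hu' v hv
  show Submodule.span F
      {w : A | ∃ u ∈ derSeries mul 1, ∃ v ∈ derSeries mul 1, w = mul u v} = ⊥
  rw [Submodule.span_eq_bot]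
  rintro _ ⟨u, hu, v, hv, rfl⟩
  exact hz u hu v hv
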